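/- For every integer j with 1 ≤ j ≤ 104, the exponential sum |Σ_{s=1}^{12} e(j·2^s/105)| is at most 6, and this maximum value 6 is attained for some j in that range. -/

import Mathlib

open Finset

noncomputable def e (x : ℝ) : ℂ := Complex.exp (2 * Real.pi * Complex.I * x)

lemma e_add (x y : ℝ) : e (x + y) = e x * e y := by
  rw [e, e, e, ← Complex.exp_add]; congr 1; push_cast; ring

lemma e_int (n : ℤ) : e n = 1 := by
  rw [e, show 2 * (Real.pi:ℂ) * Complex.I * (n:ℝ) = (n:ℤ) * (2 * Real.pi * Complex.I) by push_cast; ring]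
  exact Complex.exp_int_mul_two_pi_mul_I n

lemma e_add_int (x : ℝ) (n : ℤ) : e (x + n) = e x := by
  rw [e_add, e_int, mul_one]

lemma e_nat_mul (n : ℕ) (x : ℝ) : e (n * x) = e x ^ n := by
  rw [e, e, ← Complex.exp_nat_mul]; congr 1; push_cast; ring

lemma abs_e (x : ℝ) : ‖e x‖ = 1 := by
  rw [e, Complex.norm_exp]
  simp [Complex.mul_re]

lemma e_ne_one {a b : ℕ} (hb : 0 < b) (h : ¬ b ∣ a) : e ((a:ℝ)/b) ≠ 1 := by
  intro h1
  rw [e, Complex.exp_eq_one_iff] at h1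
  obtain ⟨n, hn⟩ := h1
  have hI : (2 * (Real.pi:ℂ) * Complex.I) ≠ 0 := by
    simp [Real.pi_ne_zero, Complex.I_ne_zero]
  have hx : (((a:ℝ)/b : ℝ) : ℂ) = (n:ℂ) := by
    apply mul_left_cancel₀ hI
    push_cast at hn ⊢
    rw [hn]; ring
  have hx2 : (a:ℝ)/b = (n:ℝ) := by exact_mod_cast hx
  have hb' : (b:ℝ) ≠ 0 := by positivity
  have hx3 : (a:ℝ) = (n:ℝ) * b := by field_simp at hx2; linarith
  have hx4 : (a:ℤ) = n * b := by exact_mod_cast hx3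
  have : (b:ℤ) ∣ (a:ℤ) := ⟨n, by linarith⟩
  exact h (Int.ofNat_dvd.mp this)

lemma sum_Icc3 (f : ℕ → ℂ) : ∑ v ∈ Icc 1 3, f v = f 1 + f 2 + f 3 := by
  rw [show Icc 1 3 = ({1,2,3} : Finset ℕ) by rfl]
  simp [Finset.sum_insert, Finset.mem_insert]
  ring

lemma sum_Icc4 (f : ℕ → ℂ) : ∑ u ∈ Icc 1 4, f u = f 1 + f 2 + f 3 + f 4 := by
  rw [show Icc 1 4 = ({1,2,3,4} : Finset ℕ) by rfl]
  simp [Finset.sum_insert, Finset.mem_insert]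
  ring

lemma sum_Icc12 (f : ℕ → ℂ) : ∑ s ∈ Icc 1 12, f s =
    f 1 + f 2 + f 3 + f 4 + f 5 + f 6 + f 7 + f 8 + f 9 + f 10 + f 11 + f 12 := by
  rw [show Icc 1 12 = ({1,2,3,4,5,6,7,8,9,10,11,12} : Finset ℕ) by rfl]
  simp [Finset.sum_insert, Finset.mem_insert]
  ring

lemma sum_split (f g : ℕ → ℂ) (hf : ∀ s, f (s+4) = f s) (hg : ∀ s, g (s+3) = g s) :
    (∑ s ∈ Icc 1 12, f s * g s) = (∑ u ∈ Icc 1 4, f u) * (∑ v ∈ Icc 1 3, g v) := by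
  rw [sum_Icc12 (fun s => f s * g s), sum_Icc4, sum_Icc3]
  have f5 : f 5 = f 1 := hf 1
  have f6 : f 6 = f 2 := hf 2
  have f7 : f 7 = f 3 := hf 3
  have f8 : f 8 = f 4 := hf 4
  have f9 : f 9 = f 1 := by rw [hf 5, f5]
  have f10 : f 10 = f 2 := by rw [hf 6, f6]
  have f11 : f 11 = f 3 := by rw [hf 7, f7]
  have f12 : f 12 = f 4 := by rw [hf 8, f8]
  have g4 : g 4 = g 1 := hg 1
  have g5 : g 5 = g 2 := hg 2
  have g6 : g 6 = g 3 := hg 3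
  have g7 : g 7 = g 1 := by rw [hg 4, g4]
  have g8 : g 8 = g 2 := by rw [hg 5, g5]
  have g9 : g 9 = g 3 := by rw [hg 6, g6]
  have g10 : g 10 = g 1 := by rw [hg 7, g7]
  have g11 : g 11 = g 2 := by rw [hg 8, g8]
  have g12 : g 12 = g 3 := by rw [hg 9, g9]
  simp only [f5, f6, f7, f8, f9, f10, f11, f12, g4, g5, g6, g7, g8, g9, g10, g11, g12]
  ring

lemma geom_zero {z : ℂ} (hz : z ≠ 1) {p : ℂ} (h : (z - 1) * p = 0) : p = 0 := by
  rcases mul_eq_zero.mp h with h1 | h1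
  · exact absurd (sub_eq_zero.mp h1) hz
  · exact h1

lemma term_fact (j : ℕ) (s : ℕ) :
    e ((j:ℝ) * 2 ^ s / 105) = e (13 * (j:ℝ) * 2 ^ s / 15) * e ((j:ℝ) * 2 ^ s / 7) := by
  rw [← e_add]
  have h : (13 * (j:ℝ) * 2 ^ s / 15 + (j:ℝ) * 2 ^ s / 7) = (j:ℝ) * 2 ^ s / 105 + ((j * 2 ^ s : ℕ) : ℤ) := by
    push_cast; ring
  rw [h, e_add_int]

lemma f_per (j : ℕ) (s : ℕ) : e (13 * (j:ℝ) * 2 ^ (s+4) / 15) = e (13 * (j:ℝ) * 2 ^ s / 15) := by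
  have h : 13 * (j:ℝ) * 2 ^ (s+4) / 15 = 13 * (j:ℝ) * 2 ^ s / 15 + ((13 * j * 2 ^ s : ℕ) : ℤ) := by
    push_cast; ring
  rw [h, e_add_int]

lemma g_per (j : ℕ) (s : ℕ) : e ((j:ℝ) * 2 ^ (s+3) / 7) = e ((j:ℝ) * 2 ^ s / 7) := by
  have h : (j:ℝ) * 2 ^ (s+3) / 7 = (j:ℝ) * 2 ^ s / 7 + ((j * 2 ^ s : ℕ) : ℤ) := by
    push_cast; ring
  rw [h, e_add_int]

lemma key_fact (j : ℕ) :
    (∑ s ∈ Icc 1 12, e ((j:ℝ) * 2 ^ s / 105)) =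
      (∑ u ∈ Icc 1 4, e (13 * (j:ℝ) * 2 ^ u / 15)) * (∑ v ∈ Icc 1 3, e ((j:ℝ) * 2 ^ v / 7)) := by
  rw [← sum_split (fun u => e (13 * (j:ℝ) * 2 ^ u / 15)) (fun v => e ((j:ℝ) * 2 ^ v / 7))
      (f_per j) (g_per j)]
  exact Finset.sum_congr rfl (fun s _ => term_fact j s)

lemma H_eq_three {j : ℕ} (h7 : 7 ∣ j) : (∑ v ∈ Icc 1 3, e ((j:ℝ) * 2 ^ v / 7)) = 3 := by
  obtain ⟨k, rfl⟩ := h7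
  rw [sum_Icc3]
  rw [show ((7*k : ℕ):ℝ) * 2 ^ 1 / 7 = ((2*k : ℕ):ℤ) by push_cast; ring]
  rw [show ((7*k : ℕ):ℝ) * 2 ^ 2 / 7 = ((4*k : ℕ):ℤ) by push_cast; ring]
  rw [show ((7*k : ℕ):ℝ) * 2 ^ 3 / 7 = ((8*k : ℕ):ℤ) by push_cast; ring]
  rw [e_int, e_int, e_int]; norm_num

lemma H_abs_le3 (j : ℕ) : ‖∑ v ∈ Icc 1 3, e ((j:ℝ) * 2 ^ v / 7)‖ ≤ 3 := by
  rw [sum_Icc3]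
  have h1 := norm_add_le (e ((j:ℝ) * 2 ^ 1 / 7) + e ((j:ℝ) * 2 ^ 2 / 7)) (e ((j:ℝ) * 2 ^ 3 / 7))
  have h2 := norm_add_le (e ((j:ℝ) * 2 ^ 1 / 7)) (e ((j:ℝ) * 2 ^ 2 / 7))
  rw [abs_e, abs_e] at h2
  rw [abs_e] at h1
  linarith

lemma G_abs_le4 (j : ℕ) : ‖∑ u ∈ Icc 1 4, e (13 * (j:ℝ) * 2 ^ u / 15)‖ ≤ 4 := by
  rw [sum_Icc4]
  have h1 := norm_add_le (e (13 * (j:ℝ) * 2 ^ 1 / 15) + e (13 * (j:ℝ) * 2 ^ 2 / 15) + e (13 * (j:ℝ) * 2 ^ 3 / 15)) (e (13 * (j:ℝ) * 2 ^ 4 / 15))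
  have h2 := norm_add_le (e (13 * (j:ℝ) * 2 ^ 1 / 15) + e (13 * (j:ℝ) * 2 ^ 2 / 15)) (e (13 * (j:ℝ) * 2 ^ 3 / 15))
  have h3 := norm_add_le (e (13 * (j:ℝ) * 2 ^ 1 / 15)) (e (13 * (j:ℝ) * 2 ^ 2 / 15))
  rw [abs_e, abs_e] at h3
  rw [abs_e] at h2
  rw [abs_e] at h1
  linarith

lemma H_abs_le {j : ℕ} (h7 : ¬ 7 ∣ j) :
    ‖∑ v ∈ Icc 1 3, e ((j:ℝ) * 2 ^ v / 7)‖ ≤ 3/2 := by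
  set z : ℂ := e ((j:ℝ)/7) with hzdef
  have hz7 : z ^ 7 = 1 := by
    rw [hzdef, ← e_nat_mul, show (7:ℕ) * ((j:ℝ)/7) = ((j:ℕ):ℤ) by push_cast; ring, e_int]
  have hz1 : z ≠ 1 := e_ne_one (by norm_num) h7
  have habs : ‖z‖ = 1 := abs_e _
  have hz0 : z ≠ 0 := by
    intro h; rw [h] at habs; simp at habs
  have hs : 1 + z + z^2 + z^3 + z^4 + z^5 + z^6 = 0 := by
    apply geom_zero hz1; linear_combination hz7
  have hH : (∑ v ∈ Icc 1 3, e ((j:ℝ) * 2 ^ v / 7)) = z + z^2 + z^4 := by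
    rw [sum_Icc3]
    rw [show (j:ℝ) * 2 ^ 1 / 7 = (2:ℕ) * ((j:ℝ)/7) by push_cast; ring, e_nat_mul]
    rw [show (j:ℝ) * 2 ^ 2 / 7 = (4:ℕ) * ((j:ℝ)/7) by push_cast; ring, e_nat_mul]
    rw [show (j:ℝ) * 2 ^ 3 / 7 = (8:ℕ) * ((j:ℝ)/7) by push_cast; ring, e_nat_mul]
    rw [← hzdef]
    have h8 : z ^ 8 = z := by calc z ^ 8 = z ^ 7 * z := by ring
                                   _ = z := by rw [hz7, one_mul]
    rw [h8]; ring
  have hconj : (starRingEnd ℂ) z = z ^ 6 := by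
    apply mul_left_cancel₀ hz0
    rw [Complex.mul_conj]
    rw [show Complex.normSq z = ‖z‖ ^ 2 from (Complex.sq_norm z).symm, habs]
    rw [show z * z ^ 6 = z ^ 7 by ring, hz7]; norm_num
  set H := (∑ v ∈ Icc 1 3, e ((j:ℝ) * 2 ^ v / 7)) with hHdef
  have hprod : H * (starRingEnd ℂ) H = 2 := by
    rw [hH, map_add, map_add, map_pow, map_pow, hconj]
    have h12 : (z^6)^2 = z^5 := by calc (z^6)^2 = z^7 * z^5 := by ring
                                        _ = z^5 := by rw [hz7, one_mul]
    have h24 : (z^6)^4 = z^3 := by calc (z^6)^4 = (z^7)^3 * z^3 := by ring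
                                        _ = z^3 := by rw [hz7, one_pow, one_mul]
    rw [h12, h24]
    linear_combination hs + (3 + z + z^2 + z^3) * hz7
  have hnsq : Complex.normSq H = 2 := by
    have := Complex.mul_conj H
    rw [hprod] at this
    exact_mod_cast this.symm
  have hsq : ‖H‖ ^ 2 = 2 := by rw [Complex.sq_norm, hnsq]
  nlinarith [norm_nonneg H]

lemma G_case_b {j : ℕ} (h3 : 3 ∣ j) (h5 : ¬ 5 ∣ j) :
    (∑ u ∈ Icc 1 4, e (13 * (j:ℝ) * 2 ^ u / 15)) = -1 := by
  obtain ⟨k, rfl⟩ := h3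
  have h5k : ¬ 5 ∣ k := fun h => h5 (h.mul_left 3)
  set z : ℂ := e ((k:ℝ)/5) with hzdef
  have hz5 : z ^ 5 = 1 := by
    rw [hzdef, ← e_nat_mul, show (5:ℕ) * ((k:ℝ)/5) = ((k:ℕ):ℤ) by push_cast; ring, e_int]
  have hz1 : z ≠ 1 := e_ne_one (by norm_num) h5k
  have hs : 1 + z + z^2 + z^3 + z^4 = 0 := by
    apply geom_zero hz1; linear_combination hz5
  rw [sum_Icc4]
  rw [show 13 * ((3*k : ℕ):ℝ) * 2 ^ 1 / 15 = (26:ℕ) * ((k:ℝ)/5) by push_cast; ring, e_nat_mul]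
  rw [show 13 * ((3*k : ℕ):ℝ) * 2 ^ 2 / 15 = (52:ℕ) * ((k:ℝ)/5) by push_cast; ring, e_nat_mul]
  rw [show 13 * ((3*k : ℕ):ℝ) * 2 ^ 3 / 15 = (104:ℕ) * ((k:ℝ)/5) by push_cast; ring, e_nat_mul]
  rw [show 13 * ((3*k : ℕ):ℝ) * 2 ^ 4 / 15 = (208:ℕ) * ((k:ℝ)/5) by push_cast; ring, e_nat_mul]
  rw [← hzdef]
  have h26 : z ^ 26 = z := by calc z^26 = (z^5)^5 * z := by ring
                                   _ = z := by rw [hz5]; ring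
  have h52 : z ^ 52 = z^2 := by calc z^52 = (z^5)^10 * z^2 := by ring
                                   _ = z^2 := by rw [hz5]; ring
  have h104 : z ^ 104 = z^4 := by calc z^104 = (z^5)^20 * z^4 := by ring
                                   _ = z^4 := by rw [hz5]; ring
  have h208 : z ^ 208 = z^3 := by calc z^208 = (z^5)^41 * z^3 := by ring
                                   _ = z^3 := by rw [hz5]; ring
  rw [h26, h52, h104, h208]
  linear_combination hs

lemma G_case_c {j : ℕ} (h5 : 5 ∣ j) (h3 : ¬ 3 ∣ j) :
    (∑ u ∈ Icc 1 4, e (13 * (j:ℝ) * 2 ^ u / 15)) = -2 := by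
  obtain ⟨k, rfl⟩ := h5
  have h3k : ¬ 3 ∣ k := fun h => h3 (h.mul_left 5)
  set z : ℂ := e ((k:ℝ)/3) with hzdef
  have hz3 : z ^ 3 = 1 := by
    rw [hzdef, ← e_nat_mul, show (3:ℕ) * ((k:ℝ)/3) = ((k:ℕ):ℤ) by push_cast; ring, e_int]
  have hz1 : z ≠ 1 := e_ne_one (by norm_num) h3k
  have hs : 1 + z + z^2 = 0 := by
    apply geom_zero hz1; linear_combination hz3
  rw [sum_Icc4]
  rw [show 13 * ((5*k : ℕ):ℝ) * 2 ^ 1 / 15 = (26:ℕ) * ((k:ℝ)/3) by push_cast; ring, e_nat_mul]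
  rw [show 13 * ((5*k : ℕ):ℝ) * 2 ^ 2 / 15 = (52:ℕ) * ((k:ℝ)/3) by push_cast; ring, e_nat_mul]
  rw [show 13 * ((5*k : ℕ):ℝ) * 2 ^ 3 / 15 = (104:ℕ) * ((k:ℝ)/3) by push_cast; ring, e_nat_mul]
  rw [show 13 * ((5*k : ℕ):ℝ) * 2 ^ 4 / 15 = (208:ℕ) * ((k:ℝ)/3) by push_cast; ring, e_nat_mul]
  rw [← hzdef]
  have h26 : z ^ 26 = z^2 := by calc z^26 = (z^3)^8 * z^2 := by ring
                                   _ = z^2 := by rw [hz3]; ring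
  have h52 : z ^ 52 = z := by calc z^52 = (z^3)^17 * z := by ring
                                   _ = z := by rw [hz3]; ring
  have h104 : z ^ 104 = z^2 := by calc z^104 = (z^3)^34 * z^2 := by ring
                                   _ = z^2 := by rw [hz3]; ring
  have h208 : z ^ 208 = z := by calc z^208 = (z^3)^69 * z := by ring
                                   _ = z := by rw [hz3]; ring
  rw [h26, h52, h104, h208]
  linear_combination 2 * hs

lemma G_case_a {j : ℕ} (h3 : ¬ 3 ∣ j) :
    ‖∑ u ∈ Icc 1 4, e (13 * (j:ℝ) * 2 ^ u / 15)‖ ≤ 2 := by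
  set w : ℂ := e ((j:ℝ)/15) with hwdef
  have hw15 : w ^ 15 = 1 := by
    rw [hwdef, ← e_nat_mul, show (15:ℕ) * ((j:ℝ)/15) = ((j:ℕ):ℤ) by push_cast; ring, e_int]
  have h15 : ¬ 15 ∣ j := fun h => h3 (dvd_trans ⟨5, rfl⟩ h)
  have hw1 : w ≠ 1 := e_ne_one (by norm_num) h15
  have habs : ‖w‖ = 1 := abs_e _
  have hw0 : w ≠ 0 := by intro h; rw [h] at habs; simp at habs
  have hq : 1 + w + w^2 + w^3 + w^4 + w^5 + w^6 + w^7 + w^8 + w^9 + w^10 + w^11 + w^12 + w^13 + w^14 = 0 := by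
    apply geom_zero hw1; linear_combination hw15
  have hy : w ^ 5 = e ((j:ℝ)/3) := by
    rw [hwdef, ← e_nat_mul, show (5:ℕ) * ((j:ℝ)/15) = (j:ℝ)/3 by push_cast; ring]
  have hy1 : w ^ 5 ≠ 1 := by rw [hy]; exact e_ne_one (by norm_num) h3
  have hy3 : (w^5) ^ 3 = 1 := by rw [← pow_mul]; exact hw15
  have hp : 1 + w^5 + w^10 = 0 := by
    have := geom_zero hy1 (p := 1 + w^5 + (w^5)^2) (by linear_combination hy3)
    linear_combination this
  have hG : (∑ u ∈ Icc 1 4, e (13 * (j:ℝ) * 2 ^ u / 15)) = w^11 + w^7 + w^14 + w^13 := by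
    rw [sum_Icc4]
    rw [show 13 * (j:ℝ) * 2 ^ 1 / 15 = (26:ℕ) * ((j:ℝ)/15) by push_cast; ring, e_nat_mul]
    rw [show 13 * (j:ℝ) * 2 ^ 2 / 15 = (52:ℕ) * ((j:ℝ)/15) by push_cast; ring, e_nat_mul]
    rw [show 13 * (j:ℝ) * 2 ^ 3 / 15 = (104:ℕ) * ((j:ℝ)/15) by push_cast; ring, e_nat_mul]
    rw [show 13 * (j:ℝ) * 2 ^ 4 / 15 = (208:ℕ) * ((j:ℝ)/15) by push_cast; ring, e_nat_mul]
    rw [← hwdef]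
    have h26 : w ^ 26 = w^11 := by calc w^26 = w^15 * w^11 := by ring
                                        _ = w^11 := by rw [hw15]; ring
    have h52 : w ^ 52 = w^7 := by calc w^52 = (w^15)^3 * w^7 := by ring
                                       _ = w^7 := by rw [hw15]; ring
    have h104 : w ^ 104 = w^14 := by calc w^104 = (w^15)^6 * w^14 := by ring
                                          _ = w^14 := by rw [hw15]; ring
    have h208 : w ^ 208 = w^13 := by calc w^208 = (w^15)^13 * w^13 := by ring
                                          _ = w^13 := by rw [hw15]; ring
    rw [h26, h52, h104, h208]
  set G := (∑ u ∈ Icc 1 4, e (13 * (j:ℝ) * 2 ^ u / 15)) with hGdef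
  have hconj : (starRingEnd ℂ) w = w ^ 14 := by
    apply mul_left_cancel₀ hw0
    rw [Complex.mul_conj]
    rw [show Complex.normSq w = ‖w‖ ^ 2 from (Complex.sq_norm w).symm, habs]
    rw [show w * w ^ 14 = w ^ 15 by ring, hw15]; norm_num
  have hprod : G * (starRingEnd ℂ) G = 4 := by
    rw [hG, map_add, map_add, map_add, map_pow, map_pow, map_pow, map_pow, hconj]
    have e11 : (w^14)^11 = w^4 := by calc (w^14)^11 = (w^15)^10 * w^4 := by ring
                                          _ = w^4 := by rw [hw15]; ring
    have e7 : (w^14)^7 = w^8 := by calc (w^14)^7 = (w^15)^6 * w^8 := by ring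
                                        _ = w^8 := by rw [hw15]; ring
    have e14 : (w^14)^14 = w := by calc (w^14)^14 = (w^15)^13 * w := by ring
                                        _ = w := by rw [hw15]; ring
    have e13 : (w^14)^13 = w^2 := by calc (w^14)^13 = (w^15)^12 * w^2 := by ring
                                          _ = w^2 := by rw [hw15]; ring
    rw [e11, e7, e14, e13]
    linear_combination hq - hp + (4 + w + w^2 + w^3 + w^4 + w^6 + w^7) * hw15
  have hnsq : Complex.normSq G = 4 := by
    have := Complex.mul_conj G
    rw [hprod] at this
    exact_mod_cast this.symm
  have hsq : ‖G‖ ^ 2 = 4 := by rw [Complex.sq_norm, hnsq]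
  nlinarith [norm_nonneg G]

theorem stmt_3 :
    (∀ j ∈ Finset.Icc (1 : ℕ) 104,
      ‖∑ s ∈ Finset.Icc (1 : ℕ) 12, e ((j : ℝ) * 2 ^ s / 105)‖ ≤ 6) ∧
    (∃ j ∈ Finset.Icc (1 : ℕ) 104,
      ‖∑ s ∈ Finset.Icc (1 : ℕ) 12, e ((j : ℝ) * 2 ^ s / 105)‖ = 6) := by
  constructor
  · intro j hj
    rw [Finset.mem_Icc] at hj
    rw [key_fact j, norm_mul]
    by_cases h7 : 7 ∣ j
    · -- |H| = 3, need |G| ≤ 2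
      have hH : ‖∑ v ∈ Icc 1 3, e ((j:ℝ) * 2 ^ v / 7)‖ = 3 := by
        rw [H_eq_three h7]; norm_num
      have hG : ‖∑ u ∈ Icc 1 4, e (13 * (j:ℝ) * 2 ^ u / 15)‖ ≤ 2 := by
        by_cases h3 : 3 ∣ j
        · by_cases h5 : 5 ∣ j
          · exfalso
            have h15 : 15 ∣ j := Nat.Coprime.mul_dvd_of_dvd_of_dvd (by norm_num) h3 h5
            have h105 : 105 ∣ j := Nat.Coprime.mul_dvd_of_dvd_of_dvd (by norm_num) h15 h7
            have := Nat.le_of_dvd (by omega) h105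
            omega
          · rw [G_case_b h3 h5]; norm_num
        · exact G_case_a h3
      calc ‖∑ u ∈ Icc 1 4, e (13 * (j:ℝ) * 2 ^ u / 15)‖ *
            ‖∑ v ∈ Icc 1 3, e ((j:ℝ) * 2 ^ v / 7)‖
          ≤ 2 * 3 := by
            rw [hH]
            exact mul_le_mul_of_nonneg_right hG (by norm_num)
        _ = 6 := by norm_num
    · have hH : ‖∑ v ∈ Icc 1 3, e ((j:ℝ) * 2 ^ v / 7)‖ ≤ 3/2 := H_abs_le h7
      have hG := G_abs_le4 j
      calc ‖∑ u ∈ Icc 1 4, e (13 * (j:ℝ) * 2 ^ u / 15)‖ *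
            ‖∑ v ∈ Icc 1 3, e ((j:ℝ) * 2 ^ v / 7)‖
          ≤ 4 * (3/2) := by
            apply mul_le_mul hG hH (norm_nonneg _) (by norm_num)
        _ = 6 := by norm_num
  · refine ⟨35, by norm_num, ?_⟩
    rw [key_fact 35, G_case_c (by norm_num) (by norm_num), H_eq_three (by norm_num)]
    rw [show ((-2:ℂ) * 3) = -6 by norm_num]
    rw [norm_neg]
    norm_num [Complex.norm_ofNat]
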